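/- Let (X,d) be a compact metric space and f : X → X a homeomorphism with the two-sided limit shadowing property. Then for every n ∈ ℤ with n ≠ 0, the homeomorphism f^n also has the two-sided limit shadowing property. -/

import Mathlib

open Filter Topology

variable {X : Type*} [MetricSpace X]

/-- A two-sided limit pseudo-orbit: `d(g(x i), x (i+1)) → 0` as `|i| → ∞`. -/
def IsTwoSidedLimitPseudoOrbit (g : X ≃ X) (x : ℤ → X) : Prop :=
  Tendsto (fun i : ℤ => dist (g (x i)) (x (i + 1))) cofinite (𝓝 0)

/-- `g` has the two-sided limit shadowing property: every two-sided limit pseudo-orbit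
is two-sided limit shadowed (`d(g^i(y), x i) → 0` as `|i| → ∞`). -/
def TwoSidedLimitShadowing (g : X ≃ X) : Prop :=
  ∀ x : ℤ → X, IsTwoSidedLimitPseudoOrbit g x →
    ∃ y : X, Tendsto (fun i : ℤ => dist ((g ^ i) y) (x i)) cofinite (𝓝 0)

lemma tendsto_ediv_cofinite (n : ℤ) (hn : 0 < n) :
    Tendsto (fun k : ℤ => k / n) cofinite cofinite := by
  intro s hs
  rw [mem_cofinite] at hs
  rw [mem_map, mem_cofinite, ← Set.preimage_compl]
  have hsub : (fun k : ℤ => k / n) ⁻¹' sᶜ ⊆ ⋃ i ∈ sᶜ, Set.Ico (n * i) (n * i + n) := by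
    intro k hk
    simp only [Set.mem_iUnion, Set.mem_Ico]
    refine ⟨k / n, hk, ?_, ?_⟩
    · have h1 := Int.mul_ediv_add_emod k n
      have h2 := Int.emod_nonneg k hn.ne'
      linarith
    · have h1 := Int.mul_ediv_add_emod k n
      have h2 := Int.emod_lt_of_pos k hn
      linarith
  exact (hs.biUnion fun i _ => Set.finite_Ico _ _).subset hsub

lemma tendsto_dist_comp_uc {ι : Type*} {l : Filter ι} {F : X → X} {a b : ι → X}
    (hF : UniformContinuous F) (h : Tendsto (fun i => dist (a i) (b i)) l (𝓝 0)) :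
    Tendsto (fun i => dist (F (a i)) (F (b i))) l (𝓝 0) := by
  rw [Metric.uniformContinuous_iff] at hF
  rw [Metric.tendsto_nhds] at h ⊢
  intro ε hε
  obtain ⟨δ, hδ, hd⟩ := hF ε hε
  filter_upwards [h δ hδ] with i hi
  simp only [Real.dist_eq, sub_zero, abs_of_nonneg dist_nonneg] at hi ⊢
  exact hd hi

lemma pos_case (g : X ≃ X) (hg : TwoSidedLimitShadowing g) (n : ℤ) (hn : 0 < n) :
    TwoSidedLimitShadowing (g ^ n) := by
  intro x hx
  set z : ℤ → X := fun k => (g ^ (k % n)) (x (k / n)) with hz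
  have hub : ∀ k : ℤ, dist (g (z k)) (z (k + 1)) ≤
      dist ((g ^ n) (x (k / n))) (x (k / n + 1)) := by
    intro k
    have hq := Int.mul_ediv_add_emod k n
    have hr0 := Int.emod_nonneg k hn.ne'
    have hr1 := Int.emod_lt_of_pos k hn
    have hgz : g (z k) = (g ^ (k % n + 1)) (x (k / n)) := by
      rw [show k % n + 1 = 1 + k % n by ring, zpow_one_add, Equiv.Perm.mul_apply]
    rcases eq_or_lt_of_le (by omega : k % n + 1 ≤ n) with he | hlt
    · -- boundary case: k % n = n - 1
      have hdiv : (k + 1) / n = k / n + 1 ∧ (k + 1) % n = 0 := by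
        rw [Int.ediv_emod_unique hn]
        refine ⟨by ring_nf; linarith, le_refl 0, hn⟩
      have : z (k + 1) = x (k / n + 1) := by
        rw [hz]; simp only [hdiv.1, hdiv.2, zpow_zero, Equiv.Perm.one_apply]
      rw [this, hgz, he]
    · -- interior case
      have hdiv : (k + 1) / n = k / n ∧ (k + 1) % n = k % n + 1 := by
        rw [Int.ediv_emod_unique hn]
        exact ⟨by linarith, by omega, hlt⟩
      have : z (k + 1) = (g ^ (k % n + 1)) (x (k / n)) := by
        simp only [hz, hdiv.1, hdiv.2]
      rw [this, hgz, dist_self]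
      exact dist_nonneg
  have hzpo : IsTwoSidedLimitPseudoOrbit g z :=
    squeeze_zero (fun k => dist_nonneg) hub (hx.comp (tendsto_ediv_cofinite n hn))
  obtain ⟨y, hy⟩ := hg z hzpo
  refine ⟨y, ?_⟩
  have heq : (fun i : ℤ => dist (((g ^ n) ^ i) y) (x i)) =
      (fun k : ℤ => dist ((g ^ k) y) (z k)) ∘ (fun i : ℤ => n * i) := by
    funext i
    simp only [Function.comp_apply, hz]
    rw [← zpow_mul, Int.mul_emod_right, Int.mul_ediv_cancel_left _ hn.ne', zpow_zero,
      Equiv.Perm.one_apply]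
  rw [heq]
  exact hy.comp (mul_right_injective₀ hn.ne').tendsto_cofinite

lemma inv_case [CompactSpace X] (f : X ≃ₜ X) (h : TwoSidedLimitShadowing f.toEquiv) :
    TwoSidedLimitShadowing (f.toEquiv⁻¹) := by
  intro x hx
  have hf : UniformContinuous f := CompactSpace.uniformContinuous_of_continuous f.continuous
  set w : ℤ → X := fun i => x (-i) with hw
  have hwpo : IsTwoSidedLimitPseudoOrbit f.toEquiv w := by
    have hinj : Function.Injective (fun i : ℤ => -i - 1) := by intro a b hab; simp only at hab; omega
    have h1 : Tendsto (fun i : ℤ => dist (f.toEquiv⁻¹ (x (-i - 1))) (x (-i - 1 + 1)))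
        cofinite (𝓝 0) := hx.comp hinj.tendsto_cofinite
    have h2 := tendsto_dist_comp_uc (F := f) hf h1
    have heq : (fun i : ℤ => dist (f.toEquiv (w i)) (w (i + 1))) =
        fun i : ℤ => dist (f (f.toEquiv⁻¹ (x (-i - 1)))) (f (x (-i - 1 + 1))) := by
      funext i
      have e1 : f (f.toEquiv⁻¹ (x (-i - 1))) = x (-i - 1) :=
        Equiv.apply_symm_apply f.toEquiv _
      rw [e1, show (-i - 1 + 1 : ℤ) = -i by ring]
      simp only [hw]
      rw [show (-(i + 1) : ℤ) = -i - 1 by ring, dist_comm]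
      rfl
    rw [heq.symm] at h2
    exact h2
  obtain ⟨y, hy⟩ := h w hwpo
  refine ⟨y, ?_⟩
  have heq : (fun i : ℤ => dist ((f.toEquiv⁻¹ ^ i) y) (x i)) =
      (fun i : ℤ => dist ((f.toEquiv ^ i) y) (w i)) ∘ (fun i : ℤ => -i) := by
    funext i
    simp only [Function.comp_apply, hw, neg_neg]
    rw [inv_zpow, ← zpow_neg]
  rw [heq]
  exact hy.comp neg_injective.tendsto_cofinite

/-- If a homeomorphism of a compact metric space has the two-sided limit shadowing
property, then so does every nonzero (positive or negative) iterate `f^n`. -/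
theorem stmt6 [CompactSpace X] (f : X ≃ₜ X)
    (h : TwoSidedLimitShadowing f.toEquiv) (n : ℤ) (hn : n ≠ 0) :
    TwoSidedLimitShadowing (f.toEquiv ^ n) := by
  rcases lt_or_gt_of_ne hn with hneg | hpos
  · have h1 := pos_case _ (inv_case f h) (-n) (by omega)
    rwa [inv_zpow, zpow_neg, inv_inv] at h1
  · exact pos_case _ h n hpos
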